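/- Let E be a Dirichlet form on L²(X,m) with E(0) = 0, and let 𝔇 be the energy space of the symmetric closure sym E. Then 𝔇 is a Riesz subspace of L²(X,m): for all u, v ∈ 𝔇 one has u∧v ∈ 𝔇 and u∨v ∈ 𝔇. -/

import Mathlib

open scoped ENNReal
open MeasureTheory

noncomputable section

variable {X : Type*} [TopologicalSpace X] [MeasurableSpace X] [BorelSpace X]
variable {m : Measure X} [SigmaFinite m]

/-- Convexity for an `ℝ≥0∞`-valued functional on `L²(X,m)`. -/
def IsConvexFunctional (E : Lp ℝ 2 m → ℝ≥0∞) : Prop :=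
  ∀ u v : Lp ℝ 2 m, ∀ a b : ℝ, 0 ≤ a → 0 ≤ b → a + b = 1 →
    E (a • u + b • v) ≤ ENNReal.ofReal a * E u + ENNReal.ofReal b * E v

/-- The real function `s ↦ ½((s+α)₊ − (s−α)₋)` appearing in the second defining
inequality of Dirichlet forms. -/
def medTrunc (α s : ℝ) : ℝ :=
  (max (s + α) 0 - max (-(s - α)) 0) / 2

/-- Cipriani–Grillo: a (nonlinear) Dirichlet form is a convex, lower semicontinuous
functional `E : L²(X,m) → [0,∞]` with dense effective domain satisfying the two
structural inequalities. The second one is stated for any `w ∈ L²` which is an a.e.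
representative of `½((u−v+α)₊ − (u−v−α)₋)`. -/
def IsDirichletForm (E : Lp ℝ 2 m → ℝ≥0∞) : Prop :=
  IsConvexFunctional E ∧ LowerSemicontinuous E ∧ Dense {u : Lp ℝ 2 m | E u < ⊤} ∧
  (∀ u v : Lp ℝ 2 m, E (u ⊓ v) + E (u ⊔ v) ≤ E u + E v) ∧
  (∀ u v w : Lp ℝ 2 m, ∀ α : ℝ, 0 < α →
    (∀ᵐ x ∂m, w x = medTrunc α (u x - v x)) →
    E (v + w) + E (u - w) ≤ E u + E v)

/-- `E` is symmetric: `E 0 = 0` and `E (-u) = E u`. -/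
def IsSymmetricFunctional (E : Lp ℝ 2 m → ℝ≥0∞) : Prop :=
  E 0 = 0 ∧ ∀ u : Lp ℝ 2 m, E (-u) = E u

/-- `E₁ u = ‖u‖₂² + E u`. -/
def EOne (E : Lp ℝ 2 m → ℝ≥0∞) (u : Lp ℝ 2 m) : ℝ≥0∞ :=
  ENNReal.ofReal (‖u‖ ^ 2) + E u

/-- The Luxemburg-type norm `‖u‖_𝔇 = inf {λ > 0 | E₁(u/λ) ≤ 1}`, with `inf ∅ = ∞`. -/
def Dnorm (E : Lp ℝ 2 m → ℝ≥0∞) (u : Lp ℝ 2 m) : ℝ≥0∞ :=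
  sInf (ENNReal.ofReal '' {l : ℝ | 0 < l ∧ EOne E (l⁻¹ • u) ≤ 1})

/-- The Dirichlet space `𝔇 = {u ∈ L² | ‖u‖_𝔇 < ∞}`. -/
def Dspace (E : Lp ℝ 2 m → ℝ≥0∞) : Set (Lp ℝ 2 m) :=
  {u : Lp ℝ 2 m | Dnorm E u < ⊤}

/-- The symmetric closure `sym E` of `E`: the supremum of all lower semicontinuous convex
functionals `F` with `F ≤ E₁(·)` and `F ≤ E₁(-·)`. -/
def symE (E : Lp ℝ 2 m → ℝ≥0∞) (u : Lp ℝ 2 m) : ℝ≥0∞ :=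
  sSup {t : ℝ≥0∞ | ∃ F : Lp ℝ 2 m → ℝ≥0∞, LowerSemicontinuous F ∧ IsConvexFunctional F ∧
    (∀ w : Lp ℝ 2 m, F w ≤ EOne E w) ∧ (∀ w : Lp ℝ 2 m, F w ≤ EOne E (-w)) ∧ t = F u}

/-- The energy space of `sym E`: all `u` with `sym E (λ u) < ∞` for some `λ > 0`. -/
def DspaceSym (E : Lp ℝ 2 m → ℝ≥0∞) : Set (Lp ℝ 2 m) :=
  {u : Lp ℝ 2 m | ∃ l : ℝ, 0 < l ∧ symE E (l • u) < ⊤}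

/-! ### Auxiliary machinery for the proof -/

section AuxiliaryLemmas

set_option linter.unusedSectionVars false

variable {E : Lp ℝ 2 m → ℝ≥0∞}

/-- `EOne` of `0` vanishes when `E 0 = 0`. -/
private lemma DF_eone_zero (hzero : E 0 = 0) : EOne E 0 = 0 := by
  simp [EOne, hzero]

/-- `EOne` is convex when `E` is. -/
private lemma DF_eone_convex (hconv : IsConvexFunctional E) :
    IsConvexFunctional (EOne E) := by
  intro u v a b ha hb hab
  have h1 : ‖a • u + b • v‖ ≤ a * ‖u‖ + b * ‖v‖ := by
    calc ‖a • u + b • v‖ ≤ ‖a • u‖ + ‖b • v‖ := norm_add_le _ _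
    _ = a * ‖u‖ + b * ‖v‖ := by
        rw [norm_smul, norm_smul, Real.norm_of_nonneg ha, Real.norm_of_nonneg hb]
  have h2 : ‖a • u + b • v‖ ^ 2 ≤ a * ‖u‖ ^ 2 + b * ‖v‖ ^ 2 := by
    nlinarith [norm_nonneg (a • u + b • v), norm_nonneg u, norm_nonneg v,
      mul_nonneg (mul_nonneg ha hb) (sq_nonneg (‖u‖ - ‖v‖)),
      mul_nonneg ha (norm_nonneg u), mul_nonneg hb (norm_nonneg v)]
  have h3 : ENNReal.ofReal (‖a • u + b • v‖ ^ 2)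
      ≤ ENNReal.ofReal a * ENNReal.ofReal (‖u‖ ^ 2)
        + ENNReal.ofReal b * ENNReal.ofReal (‖v‖ ^ 2) := by
    rw [← ENNReal.ofReal_mul ha, ← ENNReal.ofReal_mul hb,
      ← ENNReal.ofReal_add (by positivity) (by positivity)]
    exact ENNReal.ofReal_le_ofReal h2
  calc EOne E (a • u + b • v)
      ≤ (ENNReal.ofReal a * ENNReal.ofReal (‖u‖ ^ 2)
          + ENNReal.ofReal b * ENNReal.ofReal (‖v‖ ^ 2))
        + (ENNReal.ofReal a * E u + ENNReal.ofReal b * E v) :=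
        add_le_add h3 (hconv u v a b ha hb hab)
  _ = ENNReal.ofReal a * EOne E u + ENNReal.ofReal b * EOne E v := by
      simp only [EOne, mul_add]; ring

/-- The lattice inequality for `EOne`, dropping the `⊓` term. -/
private lemma DF_eone_sup_le
    (hlat : ∀ u v : Lp ℝ 2 m, E (u ⊓ v) + E (u ⊔ v) ≤ E u + E v) (P R : Lp ℝ 2 m) :
    EOne E (P ⊔ R) ≤ EOne E P + EOne E R := by
  have hE : E (P ⊔ R) ≤ E P + E R := le_add_self.trans (hlat P R)
  have hkey : ‖P ⊔ R‖ ^ 2 + ‖P ⊓ R‖ ^ 2 = ‖P‖ ^ 2 + ‖R‖ ^ 2 := by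
    have h1 := parallelogram_law_with_norm ℝ (P ⊔ R) (P ⊓ R)
    have h2 := parallelogram_law_with_norm ℝ P R
    have e1 : (P ⊔ R) + (P ⊓ R) = P + R := by rw [add_comm]; exact inf_add_sup P R
    have e2 : ‖(P ⊔ R) - (P ⊓ R)‖ = ‖P - R‖ := by
      rw [sup_sub_inf_eq_abs_sub, norm_abs_eq_norm, ← neg_sub P R, norm_neg]
    rw [e1, e2] at h1
    nlinarith [h1, h2]
  have hnorm : ‖P ⊔ R‖ ^ 2 ≤ ‖P‖ ^ 2 + ‖R‖ ^ 2 := by nlinarith [sq_nonneg ‖P ⊓ R‖]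
  calc EOne E (P ⊔ R) ≤ ENNReal.ofReal (‖P‖ ^ 2 + ‖R‖ ^ 2) + (E P + E R) :=
        add_le_add (ENNReal.ofReal_le_ofReal hnorm) hE
  _ = EOne E P + EOne E R := by
      rw [ENNReal.ofReal_add (by positivity) (by positivity)]; simp only [EOne]; ring

/-- Shrinking: `f (A • p) ≤ A * f p` for `0 ≤ A ≤ 1`, `f` convex, `f 0 = 0`. -/
private lemma DF_convex_smul_le {f : Lp ℝ 2 m → ℝ≥0∞} (hf : IsConvexFunctional f)
    (hf0 : f 0 = 0) {A : ℝ} (hA : 0 ≤ A) (hA1 : A ≤ 1) (p : Lp ℝ 2 m) :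
    f (A • p) ≤ ENNReal.ofReal A * f p := by
  have := hf p 0 A (1 - A) hA (by linarith) (by ring)
  simpa [hf0] using this

/-- The defining family for the symmetric closure. -/
private def DF_Fam (E F : Lp ℝ 2 m → ℝ≥0∞) : Prop :=
  LowerSemicontinuous F ∧ IsConvexFunctional F ∧
    (∀ w : Lp ℝ 2 m, F w ≤ EOne E w) ∧ (∀ w : Lp ℝ 2 m, F w ≤ EOne E (-w))

private lemma DF_Fam.le_symE {F : Lp ℝ 2 m → ℝ≥0∞} (hF : DF_Fam E F) (x : Lp ℝ 2 m) :
    F x ≤ symE E x :=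
  le_sSup ⟨F, hF.1, hF.2.1, hF.2.2.1, hF.2.2.2, rfl⟩

private lemma DF_symE_le {c : ℝ≥0∞} {x : Lp ℝ 2 m}
    (h : ∀ F : Lp ℝ 2 m → ℝ≥0∞, DF_Fam E F → F x ≤ c) : symE E x ≤ c := by
  apply sSup_le
  rintro t ⟨F, h1, h2, h3, h4, rfl⟩
  exact h F ⟨h1, h2, h3, h4⟩

private lemma DF_symE_zero (hzero : E 0 = 0) : symE E 0 = 0 := by
  refine le_antisymm (DF_symE_le ?_) zero_le
  intro F hF
  have := hF.2.2.1 0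
  simpa [EOne, hzero] using this

private lemma DF_fam_neg {F : Lp ℝ 2 m → ℝ≥0∞} (hF : DF_Fam E F) :
    DF_Fam E (fun w => F (-w)) := by
  obtain ⟨h1, h2, h3, h4⟩ := hF
  refine ⟨h1.comp continuous_neg, ?_, fun w => ?_, fun w => h3 (-w)⟩
  · intro u v a b ha hb hab
    show F (-(a • u + b • v)) ≤ ENNReal.ofReal a * F (-u) + ENNReal.ofReal b * F (-v)
    have heq : -(a • u + b • v) = a • (-u) + b • (-v) := by module
    rw [heq]
    exact h2 (-u) (-v) a b ha hb hab
  · show F (-w) ≤ EOne E w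
    have := h4 (-w)
    rwa [neg_neg] at this

private lemma DF_symE_neg (x : Lp ℝ 2 m) : symE E (-x) = symE E x := by
  have key : ∀ y : Lp ℝ 2 m, symE E (-y) ≤ symE E y := by
    intro y
    apply DF_symE_le
    intro F hF
    exact (DF_fam_neg hF).le_symE y
  refine le_antisymm (key x) ?_
  have := key (-x)
  rwa [neg_neg] at this

private lemma DF_symE_comb (x y : Lp ℝ 2 m) {a b : ℝ}
    (ha : 0 ≤ a) (hb : 0 ≤ b) (hab : a + b = 1) :
    symE E (a • x + b • y) ≤ ENNReal.ofReal a * symE E x + ENNReal.ofReal b * symE E y := by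
  apply DF_symE_le
  intro F hF
  calc F (a • x + b • y) ≤ ENNReal.ofReal a * F x + ENNReal.ofReal b * F y :=
        hF.2.1 x y a b ha hb hab
  _ ≤ ENNReal.ofReal a * symE E x + ENNReal.ofReal b * symE E y :=
      add_le_add (mul_le_mul_right (hF.le_symE x) _) (mul_le_mul_right (hF.le_symE y) _)

private lemma DF_symE_smul_le (hzero : E 0 = 0) (x : Lp ℝ 2 m) {t : ℝ}
    (h0 : 0 ≤ t) (h1 : t ≤ 1) : symE E (t • x) ≤ symE E x := by
  have h := DF_symE_comb (E := E) x 0 h0 (b := 1 - t) (by linarith) (by ring)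
  rw [smul_zero, add_zero, DF_symE_zero hzero, mul_zero, add_zero] at h
  calc symE E (t • x) ≤ ENNReal.ofReal t * symE E x := h
  _ ≤ 1 * symE E x := mul_le_mul_left (ENNReal.ofReal_le_one.mpr h1) _
  _ = symE E x := one_mul _

/-- Combining two scaled points into a single convex-decomposition point. -/
private lemma DF_comb_bound {f : Lp ℝ 2 m → ℝ≥0∞} (hf : IsConvexFunctional f)
    {c₁ c₂ : ℝ} (h1 : 0 ≤ c₁) (h2 : 0 ≤ c₂) (p₁ p₂ : Lp ℝ 2 m) :
    ∃ p : Lp ℝ 2 m, c₁ • p₁ + c₂ • p₂ = (c₁ + c₂) • p ∧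
      ENNReal.ofReal (c₁ + c₂) * f p ≤
        ENNReal.ofReal c₁ * f p₁ + ENNReal.ofReal c₂ * f p₂ := by
  rcases eq_or_lt_of_le (add_nonneg h1 h2) with hS | hS
  · have hc1 : c₁ = 0 := by linarith
    have hc2 : c₂ = 0 := by linarith
    exact ⟨0, by simp [hc1, hc2], by simp [hc1, hc2]⟩
  · refine ⟨(c₁ + c₂)⁻¹ • (c₁ • p₁ + c₂ • p₂), ?_, ?_⟩
    · rw [smul_smul, mul_inv_cancel₀ (ne_of_gt hS), one_smul]
    · have hp : (c₁ + c₂)⁻¹ • (c₁ • p₁ + c₂ • p₂)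
          = (c₁ / (c₁ + c₂)) • p₁ + (c₂ / (c₁ + c₂)) • p₂ := by
        rw [smul_add, smul_smul, smul_smul, inv_mul_eq_div, inv_mul_eq_div]
      rw [hp]
      have e1 : (c₁ + c₂) * (c₁ / (c₁ + c₂)) = c₁ := by field_simp
      have e2 : (c₁ + c₂) * (c₂ / (c₁ + c₂)) = c₂ := by field_simp
      calc ENNReal.ofReal (c₁ + c₂) * f ((c₁ / (c₁ + c₂)) • p₁ + (c₂ / (c₁ + c₂)) • p₂)
          ≤ ENNReal.ofReal (c₁ + c₂) *
            (ENNReal.ofReal (c₁ / (c₁ + c₂)) * f p₁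
              + ENNReal.ofReal (c₂ / (c₁ + c₂)) * f p₂) := by
            gcongr
            exact hf p₁ p₂ (c₁ / (c₁ + c₂)) (c₂ / (c₁ + c₂)) (by positivity) (by positivity)
              (by field_simp)
      _ = ENNReal.ofReal ((c₁ + c₂) * (c₁ / (c₁ + c₂))) * f p₁
            + ENNReal.ofReal ((c₁ + c₂) * (c₂ / (c₁ + c₂))) * f p₂ := by
            rw [mul_add, ← mul_assoc, ← mul_assoc,
              ← ENNReal.ofReal_mul hS.le, ← ENNReal.ofReal_mul hS.le]
      _ = ENNReal.ofReal c₁ * f p₁ + ENNReal.ofReal c₂ * f p₂ := by rw [e1, e2]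

/-- The decomposition functional whose lsc hull realizes the symmetric closure bound. -/
private def DF_Phi (E : Lp ℝ 2 m → ℝ≥0∞) (y : Lp ℝ 2 m) : ℝ≥0∞ :=
  sInf {t : ℝ≥0∞ | ∃ A B : ℝ, ∃ p r : Lp ℝ 2 m, 0 ≤ A ∧ 0 ≤ B ∧ A + B = 1 ∧
    y = A • p - B • r ∧ t = ENNReal.ofReal A * EOne E p + ENNReal.ofReal B * EOne E r}

private lemma DF_Phi_le_eone (E : Lp ℝ 2 m → ℝ≥0∞) (y : Lp ℝ 2 m) :
    DF_Phi E y ≤ EOne E y :=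
  sInf_le ⟨1, 0, y, 0, zero_le_one, le_refl 0, by norm_num, by simp, by simp⟩

private lemma DF_Phi_le_eone_neg (E : Lp ℝ 2 m → ℝ≥0∞) (y : Lp ℝ 2 m) :
    DF_Phi E y ≤ EOne E (-y) :=
  sInf_le ⟨0, 1, 0, -y, le_refl 0, zero_le_one, by norm_num, by simp, by simp⟩

private lemma DF_Phi_convex (hconv : IsConvexFunctional E) :
    IsConvexFunctional (DF_Phi E) := by
  intro y₁ y₂ a b ha hb hab
  rcases ha.eq_or_lt with ha0 | ha0
  · rw [← ha0] at hab ⊢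
    have hb1 : b = 1 := by linarith
    rw [hb1]; simp
  rcases hb.eq_or_lt with hb0 | hb0
  · rw [← hb0] at hab ⊢
    have ha1 : a = 1 := by linarith
    rw [ha1]; simp
  apply ENNReal.le_of_forall_pos_le_add
  intro ε hε hfin
  have hfa : DF_Phi E y₁ ≠ ⊤ := by
    intro h
    rw [h, ENNReal.mul_top (ENNReal.ofReal_pos.mpr ha0).ne', top_add] at hfin
    exact absurd hfin (lt_irrefl ⊤)
  have hfb : DF_Phi E y₂ ≠ ⊤ := by
    intro h
    rw [h, ENNReal.mul_top (ENNReal.ofReal_pos.mpr hb0).ne', add_top] at hfin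
    exact absurd hfin (lt_irrefl ⊤)
  have hεne : (ε : ℝ≥0∞) ≠ 0 := by exact_mod_cast hε.ne'
  obtain ⟨t₁, ht₁mem, ht₁⟩ := sInf_lt_iff.mp (ENNReal.lt_add_right hfa hεne)
  obtain ⟨t₂, ht₂mem, ht₂⟩ := sInf_lt_iff.mp (ENNReal.lt_add_right hfb hεne)
  obtain ⟨A₁, B₁, p₁, r₁, hA₁, hB₁, hAB₁, hy₁, rfl⟩ := ht₁mem
  obtain ⟨A₂, B₂, p₂, r₂, hA₂, hB₂, hAB₂, hy₂, rfl⟩ := ht₂mem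
  obtain ⟨p, hpEq, hpLe⟩ := DF_comb_bound (DF_eone_convex hconv)
    (mul_nonneg ha hA₁) (mul_nonneg hb hA₂) p₁ p₂
  obtain ⟨r, hrEq, hrLe⟩ := DF_comb_bound (DF_eone_convex hconv)
    (mul_nonneg ha hB₁) (mul_nonneg hb hB₂) r₁ r₂
  have hdecomp : a • y₁ + b • y₂ = (a * A₁ + b * A₂) • p - (a * B₁ + b * B₂) • r := by
    rw [← hpEq, ← hrEq, hy₁, hy₂]
    module
  have hmem : ENNReal.ofReal (a * A₁ + b * A₂) * EOne E p
      + ENNReal.ofReal (a * B₁ + b * B₂) * EOne E r ∈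
      {t : ℝ≥0∞ | ∃ A B : ℝ, ∃ p r : Lp ℝ 2 m, 0 ≤ A ∧ 0 ≤ B ∧ A + B = 1 ∧
        a • y₁ + b • y₂ = A • p - B • r ∧
        t = ENNReal.ofReal A * EOne E p + ENNReal.ofReal B * EOne E r} :=
    ⟨a * A₁ + b * A₂, a * B₁ + b * B₂, p, r,
      by positivity, by positivity, by nlinarith, hdecomp, rfl⟩
  calc DF_Phi E (a • y₁ + b • y₂)
      ≤ ENNReal.ofReal (a * A₁ + b * A₂) * EOne E p
        + ENNReal.ofReal (a * B₁ + b * B₂) * EOne E r := sInf_le hmem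
  _ ≤ (ENNReal.ofReal (a * A₁) * EOne E p₁ + ENNReal.ofReal (b * A₂) * EOne E p₂)
        + (ENNReal.ofReal (a * B₁) * EOne E r₁ + ENNReal.ofReal (b * B₂) * EOne E r₂) :=
      add_le_add hpLe hrLe
  _ = ENNReal.ofReal a * (ENNReal.ofReal A₁ * EOne E p₁ + ENNReal.ofReal B₁ * EOne E r₁)
        + ENNReal.ofReal b * (ENNReal.ofReal A₂ * EOne E p₂ + ENNReal.ofReal B₂ * EOne E r₂) := by
      rw [ENNReal.ofReal_mul ha, ENNReal.ofReal_mul hb, ENNReal.ofReal_mul ha,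
        ENNReal.ofReal_mul hb]
      ring
  _ ≤ ENNReal.ofReal a * (DF_Phi E y₁ + ε) + ENNReal.ofReal b * (DF_Phi E y₂ + ε) :=
      add_le_add (mul_le_mul_right ht₁.le _) (mul_le_mul_right ht₂.le _)
  _ = (ENNReal.ofReal a * DF_Phi E y₁ + ENNReal.ofReal b * DF_Phi E y₂)
        + (ENNReal.ofReal a + ENNReal.ofReal b) * ε := by ring
  _ = ENNReal.ofReal a * DF_Phi E y₁ + ENNReal.ofReal b * DF_Phi E y₂ + ε := by
      rw [← ENNReal.ofReal_add ha hb, hab, ENNReal.ofReal_one, one_mul]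

/-- The lower semicontinuous hull of a functional. -/
private def DF_lscHull (Φ : Lp ℝ 2 m → ℝ≥0∞) (y : Lp ℝ 2 m) : ℝ≥0∞ :=
  ⨆ (ε : ℝ) (_ : 0 < ε), ⨅ (z : Lp ℝ 2 m) (_ : z ∈ Metric.ball y ε), Φ z

private lemma DF_lscHull_le (Φ : Lp ℝ 2 m → ℝ≥0∞) (y : Lp ℝ 2 m) :
    DF_lscHull Φ y ≤ Φ y :=
  iSup₂_le fun _ hε => iInf₂_le y (Metric.mem_ball_self hε)

private lemma DF_le_lscHull {Φ Ψ : Lp ℝ 2 m → ℝ≥0∞} (hΨ : LowerSemicontinuous Ψ)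
    (hle : ∀ z, Ψ z ≤ Φ z) (y : Lp ℝ 2 m) : Ψ y ≤ DF_lscHull Φ y := by
  refine le_of_forall_lt fun c hc => ?_
  obtain ⟨c', hc1, hc2⟩ := exists_between hc
  obtain ⟨ε, hε, hball⟩ := Metric.eventually_nhds_iff.mp (hΨ y c' hc2)
  have hinf : c' ≤ ⨅ (z : Lp ℝ 2 m) (_ : z ∈ Metric.ball y ε), Φ z :=
    le_iInf₂ fun z hz => le_trans (hball (Metric.mem_ball.mp hz)).le (hle z)
  calc c < c' := hc1
  _ ≤ ⨅ (z : Lp ℝ 2 m) (_ : z ∈ Metric.ball y ε), Φ z := hinf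
  _ ≤ DF_lscHull Φ y := le_iSup₂ (f := fun (ε : ℝ) (_ : 0 < ε) =>
      ⨅ (z : Lp ℝ 2 m) (_ : z ∈ Metric.ball y ε), Φ z) ε hε

private lemma DF_lscHull_lsc (Φ : Lp ℝ 2 m → ℝ≥0∞) :
    LowerSemicontinuous (DF_lscHull Φ) := by
  intro y c hc
  obtain ⟨ε, h1⟩ := lt_iSup_iff.mp hc
  obtain ⟨hε, hinf⟩ := lt_iSup_iff.mp h1
  rw [Metric.eventually_nhds_iff]
  refine ⟨ε / 2, by linarith, fun z hz => ?_⟩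
  calc c < ⨅ (w : Lp ℝ 2 m) (_ : w ∈ Metric.ball y ε), Φ w := hinf
  _ ≤ ⨅ (w : Lp ℝ 2 m) (_ : w ∈ Metric.ball z (ε / 2)), Φ w := by
      refine le_iInf₂ fun w hw => iInf₂_le w ?_
      have hsub : Metric.ball z (ε / 2) ⊆ Metric.ball y ε := by
        apply Metric.ball_subset_ball'
        have : dist z y < ε / 2 := hz
        linarith
      exact hsub hw
  _ ≤ DF_lscHull Φ z := le_iSup₂ (f := fun (ε : ℝ) (_ : 0 < ε) =>
      ⨅ (w : Lp ℝ 2 m) (_ : w ∈ Metric.ball z ε), Φ w) (ε / 2) (by linarith)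

private lemma DF_lscHull_convex {Φ : Lp ℝ 2 m → ℝ≥0∞} (hΦ : IsConvexFunctional Φ) :
    IsConvexFunctional (DF_lscHull Φ) := by
  intro y₁ y₂ a b ha hb hab
  rcases ha.eq_or_lt with ha0 | ha0
  · rw [← ha0] at hab ⊢
    have hb1 : b = 1 := by linarith
    rw [hb1]; simp
  rcases hb.eq_or_lt with hb0 | hb0
  · rw [← hb0] at hab ⊢
    have ha1 : a = 1 := by linarith
    rw [ha1]; simp
  apply iSup₂_le
  intro ε hε
  apply ENNReal.le_of_forall_pos_le_add
  intro δ hδ hfin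
  have hδne : (δ : ℝ≥0∞) ≠ 0 := by exact_mod_cast hδ.ne'
  have hL1 : DF_lscHull Φ y₁ ≠ ⊤ := by
    intro h
    rw [h, ENNReal.mul_top (ENNReal.ofReal_pos.mpr ha0).ne', top_add] at hfin
    exact absurd hfin (lt_irrefl ⊤)
  have hL2 : DF_lscHull Φ y₂ ≠ ⊤ := by
    intro h
    rw [h, ENNReal.mul_top (ENNReal.ofReal_pos.mpr hb0).ne', add_top] at hfin
    exact absurd hfin (lt_irrefl ⊤)
  set I₁ := ⨅ (z : Lp ℝ 2 m) (_ : z ∈ Metric.ball y₁ ε), Φ z with hI₁def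
  set I₂ := ⨅ (z : Lp ℝ 2 m) (_ : z ∈ Metric.ball y₂ ε), Φ z with hI₂def
  have hI₁L : I₁ ≤ DF_lscHull Φ y₁ := le_iSup₂ (f := fun (ε : ℝ) (_ : 0 < ε) =>
      ⨅ (z : Lp ℝ 2 m) (_ : z ∈ Metric.ball y₁ ε), Φ z) ε hε
  have hI₂L : I₂ ≤ DF_lscHull Φ y₂ := le_iSup₂ (f := fun (ε : ℝ) (_ : 0 < ε) =>
      ⨅ (z : Lp ℝ 2 m) (_ : z ∈ Metric.ball y₂ ε), Φ z) ε hε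
  have hI₁ : I₁ ≠ ⊤ := fun h => hL1 (top_le_iff.mp (h ▸ hI₁L))
  have hI₂ : I₂ ≠ ⊤ := fun h => hL2 (top_le_iff.mp (h ▸ hI₂L))
  obtain ⟨z₁, hz₁⟩ := iInf_lt_iff.mp (ENNReal.lt_add_right hI₁ hδne)
  obtain ⟨hz₁mem, hΦz₁⟩ := iInf_lt_iff.mp hz₁
  obtain ⟨z₂, hz₂⟩ := iInf_lt_iff.mp (ENNReal.lt_add_right hI₂ hδne)
  obtain ⟨hz₂mem, hΦz₂⟩ := iInf_lt_iff.mp hz₂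
  have hzmem : a • z₁ + b • z₂ ∈ Metric.ball (a • y₁ + b • y₂) ε := by
    rw [Metric.mem_ball, dist_eq_norm]
    have heq : (a • z₁ + b • z₂) - (a • y₁ + b • y₂) = a • (z₁ - y₁) + b • (z₂ - y₂) := by
      module
    rw [heq]
    have h1 : ‖z₁ - y₁‖ < ε := by rw [← dist_eq_norm]; exact hz₁mem
    have h2 : ‖z₂ - y₂‖ < ε := by rw [← dist_eq_norm]; exact hz₂mem
    calc ‖a • (z₁ - y₁) + b • (z₂ - y₂)‖ ≤ ‖a • (z₁ - y₁)‖ + ‖b • (z₂ - y₂)‖ :=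
        norm_add_le _ _
    _ = a * ‖z₁ - y₁‖ + b * ‖z₂ - y₂‖ := by
        rw [norm_smul, norm_smul, Real.norm_of_nonneg ha, Real.norm_of_nonneg hb]
    _ < a * ε + b * ε :=
        add_lt_add (mul_lt_mul_of_pos_left h1 ha0) (mul_lt_mul_of_pos_left h2 hb0)
    _ = ε := by rw [← add_mul, hab, one_mul]
  calc (⨅ (z : Lp ℝ 2 m) (_ : z ∈ Metric.ball (a • y₁ + b • y₂) ε), Φ z)
      ≤ Φ (a • z₁ + b • z₂) := iInf₂_le _ hzmem
  _ ≤ ENNReal.ofReal a * Φ z₁ + ENNReal.ofReal b * Φ z₂ := hΦ z₁ z₂ a b ha hb hab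
  _ ≤ ENNReal.ofReal a * (I₁ + δ) + ENNReal.ofReal b * (I₂ + δ) :=
      add_le_add (mul_le_mul_right hΦz₁.le _) (mul_le_mul_right hΦz₂.le _)
  _ ≤ ENNReal.ofReal a * (DF_lscHull Φ y₁ + δ) + ENNReal.ofReal b * (DF_lscHull Φ y₂ + δ) :=
      add_le_add (mul_le_mul_right (add_le_add_left hI₁L _) _)
        (mul_le_mul_right (add_le_add_left hI₂L _) _)
  _ = (ENNReal.ofReal a * DF_lscHull Φ y₁ + ENNReal.ofReal b * DF_lscHull Φ y₂)
        + (ENNReal.ofReal a + ENNReal.ofReal b) * δ := by ring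
  _ = ENNReal.ofReal a * DF_lscHull Φ y₁ + ENNReal.ofReal b * DF_lscHull Φ y₂ + δ := by
      rw [← ENNReal.ofReal_add ha hb, hab, ENNReal.ofReal_one, one_mul]

/-- Key estimate: any member of the family is dominated by `DF_Phi` at `½ (y ⊔ 0)`. -/
private lemma DF_fam_half_posPart_le_phi
    (hconv : IsConvexFunctional E)
    (hlat : ∀ u v : Lp ℝ 2 m, E (u ⊓ v) + E (u ⊔ v) ≤ E u + E v)
    (hzero : E 0 = 0) {F : Lp ℝ 2 m → ℝ≥0∞} (hF : DF_Fam E F) (y : Lp ℝ 2 m) :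
    F ((2⁻¹ : ℝ) • (y ⊔ 0)) ≤ DF_Phi E y := by
  apply le_sInf
  rintro t ⟨A, B, p, r, hA, hB, hAB, hy, rfl⟩
  set P := A • p with hPdef
  set R := B • r with hRdef
  have hfP : EOne E P ≤ ENNReal.ofReal A * EOne E p :=
    DF_convex_smul_le (DF_eone_convex hconv) (DF_eone_zero hzero) hA (by linarith) p
  have hfR : EOne E R ≤ ENNReal.ofReal B * EOne E r :=
    DF_convex_smul_le (DF_eone_convex hconv) (DF_eone_zero hzero) hB (by linarith) r
  have hsup : y ⊔ 0 = (P ⊔ R) - R := by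
    rw [hy, sup_sub, sub_self]
  have hsplit : (2⁻¹ : ℝ) • (y ⊔ 0) = (2⁻¹ : ℝ) • (P ⊔ R) + (2⁻¹ : ℝ) • (-R) := by
    rw [hsup]; module
  have step1 : F ((2⁻¹ : ℝ) • (y ⊔ 0)) ≤
      ENNReal.ofReal 2⁻¹ * F (P ⊔ R) + ENNReal.ofReal 2⁻¹ * F (-R) := by
    rw [hsplit]
    exact hF.2.1 (P ⊔ R) (-R) 2⁻¹ 2⁻¹ (by norm_num) (by norm_num) (by norm_num)
  have hFsup : F (P ⊔ R) ≤ EOne E P + EOne E R :=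
    (hF.2.2.1 _).trans (DF_eone_sup_le hlat P R)
  have hFnegR : F (-R) ≤ EOne E R := by
    have := hF.2.2.2 (-R)
    rwa [neg_neg] at this
  have hhalf : ENNReal.ofReal 2⁻¹ ≤ 1 := ENNReal.ofReal_le_one.mpr (by norm_num)
  calc F ((2⁻¹ : ℝ) • (y ⊔ 0))
      ≤ ENNReal.ofReal 2⁻¹ * (EOne E P + EOne E R) + ENNReal.ofReal 2⁻¹ * EOne E R :=
        step1.trans (add_le_add (mul_le_mul_right hFsup _) (mul_le_mul_right hFnegR _))
  _ = ENNReal.ofReal 2⁻¹ * EOne E P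
        + (ENNReal.ofReal 2⁻¹ + ENNReal.ofReal 2⁻¹) * EOne E R := by ring
  _ = ENNReal.ofReal 2⁻¹ * EOne E P + EOne E R := by
      rw [← ENNReal.ofReal_add (by norm_num) (by norm_num)]
      norm_num
  _ ≤ 1 * EOne E P + EOne E R := add_le_add_left (mul_le_mul_left hhalf _) _
  _ = EOne E P + EOne E R := by rw [one_mul]
  _ ≤ ENNReal.ofReal A * EOne E p + ENNReal.ofReal B * EOne E r := add_le_add hfP hfR

private lemma DF_fam_lscHull_phi (hconv : IsConvexFunctional E) :
    DF_Fam E (DF_lscHull (DF_Phi E)) :=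
  ⟨DF_lscHull_lsc _, DF_lscHull_convex (DF_Phi_convex hconv),
    fun w => (DF_lscHull_le _ _).trans (DF_Phi_le_eone E w),
    fun w => (DF_lscHull_le _ _).trans (DF_Phi_le_eone_neg E w)⟩

/-- The central inequality: `sym E (½ (x ⊔ 0)) ≤ sym E x`. -/
private lemma DF_symE_half_posPart_le
    (hconv : IsConvexFunctional E)
    (hlat : ∀ u v : Lp ℝ 2 m, E (u ⊓ v) + E (u ⊔ v) ≤ E u + E v)
    (hzero : E 0 = 0) (x : Lp ℝ 2 m) :
    symE E ((2⁻¹ : ℝ) • (x ⊔ 0)) ≤ symE E x := by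
  apply DF_symE_le
  intro F hF
  have hΨlsc : LowerSemicontinuous (fun y : Lp ℝ 2 m => F ((2⁻¹ : ℝ) • (y ⊔ 0))) :=
    hF.1.comp (g := fun y : Lp ℝ 2 m => (2⁻¹ : ℝ) • (y ⊔ 0)) (by have := (continuous_id.sup (continuous_const (y := (0 : Lp ℝ 2 m)))).const_smul (2⁻¹ : ℝ); exact this)
  have h1 : (fun y : Lp ℝ 2 m => F ((2⁻¹ : ℝ) • (y ⊔ 0))) x ≤ DF_lscHull (DF_Phi E) x :=
    DF_le_lscHull hΨlsc (fun z => DF_fam_half_posPart_le_phi hconv hlat hzero hF z) x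
  exact h1.trans ((DF_fam_lscHull_phi hconv).le_symE x)

/-- Positive scalars commute with `⊔` in `Lp`. -/
private lemma DF_smul_sup {l : ℝ} (hl : 0 ≤ l) (a b : Lp ℝ 2 m) :
    l • (a ⊔ b) = (l • a) ⊔ (l • b) := by
  apply MeasureTheory.Lp.ext
  filter_upwards [MeasureTheory.Lp.coeFn_smul l (a ⊔ b), MeasureTheory.Lp.coeFn_sup a b,
    MeasureTheory.Lp.coeFn_sup (l • a) (l • b), MeasureTheory.Lp.coeFn_smul l a,
    MeasureTheory.Lp.coeFn_smul l b] with x h1 h2 h3 h4 h5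
  rw [h1, h3]
  simp only [Pi.smul_apply, Pi.sup_apply, h2, h4, h5]
  exact smul_max_of_nonneg hl _ _

private lemma DF_mem_add (hzero : E 0 = 0) {u v : Lp ℝ 2 m}
    (hu : u ∈ DspaceSym E) (hv : v ∈ DspaceSym E) : u + v ∈ DspaceSym E := by
  obtain ⟨l₁, hl₁, h₁⟩ := hu
  obtain ⟨l₂, hl₂, h₂⟩ := hv
  have ht : 0 < min l₁ l₂ := lt_min hl₁ hl₂
  refine ⟨min l₁ l₂ / 2, by positivity, ?_⟩
  have hdecomp : (min l₁ l₂ / 2) • (u + v)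
      = (2⁻¹ : ℝ) • (min l₁ l₂ • u) + (2⁻¹ : ℝ) • (min l₁ l₂ • v) := by module
  have hu' : symE E (min l₁ l₂ • u) < ⊤ := by
    have heq : min l₁ l₂ • u = (min l₁ l₂ / l₁) • (l₁ • u) := by
      rw [smul_smul]; congr 1; field_simp
    rw [heq]
    exact lt_of_le_of_lt (DF_symE_smul_le hzero _ (by positivity)
      (by rw [div_le_one hl₁]; exact min_le_left _ _)) h₁
  have hv' : symE E (min l₁ l₂ • v) < ⊤ := by
    have heq : min l₁ l₂ • v = (min l₁ l₂ / l₂) • (l₂ • v) := by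
      rw [smul_smul]; congr 1; field_simp
    rw [heq]
    exact lt_of_le_of_lt (DF_symE_smul_le hzero _ (by positivity)
      (by rw [div_le_one hl₂]; exact min_le_right _ _)) h₂
  rw [hdecomp]
  calc symE E ((2⁻¹ : ℝ) • (min l₁ l₂ • u) + (2⁻¹ : ℝ) • (min l₁ l₂ • v))
      ≤ ENNReal.ofReal 2⁻¹ * symE E (min l₁ l₂ • u)
        + ENNReal.ofReal 2⁻¹ * symE E (min l₁ l₂ • v) :=
        DF_symE_comb _ _ (by norm_num) (by norm_num) (by norm_num)
  _ < ⊤ := by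
      apply ENNReal.add_lt_top.mpr
      constructor
      · exact ENNReal.mul_lt_top ENNReal.ofReal_lt_top hu'
      · exact ENNReal.mul_lt_top ENNReal.ofReal_lt_top hv'

private lemma DF_mem_neg {u : Lp ℝ 2 m} (hu : u ∈ DspaceSym E) : -u ∈ DspaceSym E := by
  obtain ⟨l, hl, h⟩ := hu
  exact ⟨l, hl, by rw [smul_neg, DF_symE_neg]; exact h⟩

private lemma DF_mem_posPart
    (hconv : IsConvexFunctional E)
    (hlat : ∀ u v : Lp ℝ 2 m, E (u ⊓ v) + E (u ⊔ v) ≤ E u + E v)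
    (hzero : E 0 = 0) {u : Lp ℝ 2 m} (hu : u ∈ DspaceSym E) :
    u ⊔ 0 ∈ DspaceSym E := by
  obtain ⟨l, hl, h⟩ := hu
  refine ⟨l / 2, by positivity, ?_⟩
  have h0 : ((l • u) ⊔ 0 : Lp ℝ 2 m) = l • (u ⊔ 0) := by
    rw [DF_smul_sup hl.le u 0, smul_zero]
  have heq : (l / 2) • (u ⊔ 0) = (2⁻¹ : ℝ) • ((l • u) ⊔ 0) := by
    rw [h0, smul_smul]
    congr 1
    ring
  rw [heq]
  exact lt_of_le_of_lt (DF_symE_half_posPart_le hconv hlat hzero (l • u)) h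

end AuxiliaryLemmas

/-- The energy space `𝔇` of a Dirichlet form with `E 0 = 0` is a Riesz subspace of `L²`:
it is stable under the lattice operations. -/
theorem Dspace_lattice
    (hsupp : ∀ U : Set X, IsOpen U → U.Nonempty → 0 < m U)
    (E : Lp ℝ 2 m → ℝ≥0∞) (hE : IsDirichletForm E) (hzero : E 0 = 0) :
    ∀ u ∈ DspaceSym E, ∀ v ∈ DspaceSym E,
      u ⊓ v ∈ DspaceSym E ∧ u ⊔ v ∈ DspaceSym E := by
  obtain ⟨hconv, hlsc, hdense, hlat, hmed⟩ := hE
  intro u hu v hv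
  have hvu : v - u ∈ DspaceSym E := by
    rw [sub_eq_add_neg]
    exact DF_mem_add hzero hv (DF_mem_neg hu)
  have hsupMem : u ⊔ v ∈ DspaceSym E := by
    have key : u ⊔ v = u + ((v - u) ⊔ 0) := by
      rw [add_sup, add_zero]
      have h2 : u + (v - u) = v := by abel
      rw [h2, sup_comm]
    rw [key]
    exact DF_mem_add hzero hu (DF_mem_posPart hconv hlat hzero hvu)
  refine ⟨?_, hsupMem⟩
  have key : u ⊓ v = (u + v) - (u ⊔ v) := eq_sub_of_add_eq (inf_add_sup u v)
  rw [key, sub_eq_add_neg]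
  exact DF_mem_add hzero (DF_mem_add hzero hu hv) (DF_mem_neg hsupMem)

end
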